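/- Let λ = (k^m) be the rectangular partition of size m × k (m rows, each of length k, with m, k ≥ 1) and suppose |λ| = mk is even. Then the Newell–Littlewood coefficient N^λ_{λλ} is at least 1. (This is the combinatorial content of the proposition that the representation ⊗³ detects the subgroup 𝕊_{∥λ∥}(G) of GL_N for G of type B_n, C_n, or D_{2n} when λ is a rectangular partition of an even number.) -/

import Mathlib

/-- A partition: a weakly decreasing finite sequence (list) of positive
integers. -/
def IsPartition (l : List ℕ) : Prop :=
  l.Pairwise (· ≥ ·) ∧ ∀ x ∈ l, 0 < x

/-- The `i`-th part (0-indexed) of a partition, `0` beyond its length. -/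
def part (l : List ℕ) (i : ℕ) : ℕ := l.getD i 0

/-- Cell `(i, j)` (row `i`, column `j`, both 0-indexed) lies in the skew
Young diagram `ν/λ`. -/
def InSkew (nu lam : List ℕ) (i j : ℕ) : Prop :=
  part lam i ≤ j ∧ j < part nu i

/-- Cell `(i, j)` comes weakly before cell `(r, c)` in the reverse reading
order: rows are read top to bottom, and each row is read right to left. -/
def ReadingLE (i j r c : ℕ) : Prop := i < r ∨ (i = r ∧ c ≤ j)

/-- `T` is a Littlewood–Richardson tableau of shape `ν/λ` and content `μ`:
`λ ⊆ ν`, the entries of `T` are positive exactly on the cells of the skew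
diagram `ν/λ`, entries weakly increase from left to right along rows,
entries strictly increase from top to bottom down columns, for every `j ≥ 1`
the entry `j` occurs exactly `μ_j` times, and the reverse reading word is a
lattice word: every prefix contains at least as many occurrences of `j` as
of `j + 1`, for every `j ≥ 1`. -/
structure IsLRTableau (nu lam mu : List ℕ) (T : ℕ → ℕ → ℕ) : Prop where
  subset : ∀ i, part lam i ≤ part nu i
  support : ∀ i j, 0 < T i j ↔ InSkew nu lam i j
  row_weak : ∀ i j j', InSkew nu lam i j → InSkew nu lam i j' → j ≤ j' →
    T i j ≤ T i j'
  col_strict : ∀ i i' j, InSkew nu lam i j → InSkew nu lam i' j → i < i' →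
    T i j < T i' j
  content : ∀ k : ℕ, {p : ℕ × ℕ | T p.1 p.2 = k + 1}.ncard = part mu k
  lattice : ∀ r c k : ℕ,
    {p : ℕ × ℕ | T p.1 p.2 = k + 2 ∧ ReadingLE p.1 p.2 r c}.ncard ≤
    {p : ℕ × ℕ | T p.1 p.2 = k + 1 ∧ ReadingLE p.1 p.2 r c}.ncard

/-- The Littlewood–Richardson coefficient `c^ν_{λμ}`: the number of
Littlewood–Richardson tableaux of shape `ν/λ` and content `μ`. -/
noncomputable def lrCoeff (nu lam mu : List ℕ) : ℕ :=
  {T : ℕ → ℕ → ℕ | IsLRTableau nu lam mu T}.ncard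

/-- The Newell–Littlewood coefficient
`N^ν_{λμ} = Σ_{α,β,γ} c^λ_{αβ} · c^μ_{αγ} · c^ν_{βγ}`, the sum running over
all triples of partitions `(α, β, γ)` (only finitely many terms are
nonzero). -/
noncomputable def nlCoeff (lam mu nu : List ℕ) : ℕ :=
  ∑ᶠ x : {l : List ℕ // IsPartition l} × {l : List ℕ // IsPartition l} ×
      {l : List ℕ // IsPartition l},
    lrCoeff lam x.1.val x.2.1.val * lrCoeff mu x.1.val x.2.2.val *
      lrCoeff nu x.2.1.val x.2.2.val

section Aux

lemma part_replicate (n v i : ℕ) : part (List.replicate n v) i = if i < n then v else 0 := by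
  unfold part
  rcases lt_or_ge i n with h | h
  · rw [List.getD_eq_getElem?_getD, List.getElem?_replicate, if_pos h]
    simp [h]
  · rw [List.getD_eq_getElem?_getD, List.getElem?_eq_none (by simpa using h)]
    simp [Nat.not_lt.mpr h]

lemma part_lt_length {l : List ℕ} (hl : IsPartition l) {i : ℕ} (h : i < l.length) :
    0 < part l i := by
  have : part l i = l.get ⟨i, h⟩ := by
    unfold part
    rw [List.getD_eq_getElem?_getD, List.getElem?_eq_getElem h]
    rfl
  rw [this]
  exact hl.2 _ (List.get_mem _ _)

lemma part_mem {l : List ℕ} {i : ℕ} (h : i < l.length) : part l i ∈ l := by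
  have : part l i = l.get ⟨i, h⟩ := by
    unfold part
    rw [List.getD_eq_getElem?_getD, List.getElem?_eq_getElem h]
    rfl
  rw [this]; exact List.get_mem _ _

end Aux

section Canon

/-- The canonical tableau filling rows `r..m-1`, columns `c..k-1`,
with `T i j = i - r + 1`. -/
def T0 (m k r c : ℕ) : ℕ → ℕ → ℕ := fun i j =>
  if r ≤ i ∧ i < m ∧ c ≤ j ∧ j < k then i - r + 1 else 0

variable {m k r c : ℕ}

lemma inSkew_iff {A : List ℕ}
    (hA : ∀ i, part A i = if i < r then k else if i < m then c else 0)
    (hrm : r ≤ m) (i j : ℕ) :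
    InSkew (List.replicate m k) A i j ↔ (r ≤ i ∧ i < m ∧ c ≤ j ∧ j < k) := by
  unfold InSkew
  rw [hA, part_replicate]
  rcases lt_or_ge i r with h | h
  · have : i < m := lt_of_lt_of_le h hrm
    simp [h, this]
    omega
  · rcases lt_or_ge i m with h2 | h2
    · simp [Nat.not_lt.mpr h, h2]
      omega
    · simp [Nat.not_lt.mpr h, Nat.not_lt.mpr h2, Nat.not_lt.mpr (le_trans hrm h2)]

/-- The set of cells of a fixed row segment, as a Finset coercion. -/
lemma rowSet_eq (a c k : ℕ) :
    {p : ℕ × ℕ | p.1 = a ∧ c ≤ p.2 ∧ p.2 < k} =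
      ↑((Finset.Ico c k).image (fun j => ((a, j) : ℕ × ℕ))) := by
  ext ⟨x, y⟩
  simp [Finset.mem_image, Finset.mem_Ico]
  aesop

lemma rowSet_ncard (a c k : ℕ) :
    {p : ℕ × ℕ | p.1 = a ∧ c ≤ p.2 ∧ p.2 < k}.ncard = k - c := by
  rw [rowSet_eq, Set.ncard_coe_finset, Finset.card_image_of_injective, Nat.card_Ico]
  intro x y h
  simpa using h

lemma T0_level_finite (m k r c v : ℕ) :
    {p : ℕ × ℕ | T0 m k r c p.1 p.2 = v + 1}.Finite := by
  apply Set.Finite.subset ((Set.finite_Iio m).prod (Set.finite_Iio k))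
  rintro ⟨i, j⟩ h
  simp only [Set.mem_setOf_eq] at h
  unfold T0 at h
  split at h
  · next hc => exact ⟨Set.mem_Iio.mpr hc.2.1, Set.mem_Iio.mpr hc.2.2.2⟩
  · omega

lemma T0_eq_iff {i j v : ℕ} :
    T0 m k r c i j = v + 1 ↔ (i = r + v ∧ r + v < m ∧ c ≤ j ∧ j < k) := by
  unfold T0
  split
  · next h => omega
  · next h => omega

lemma isLR_T0 {A : List ℕ}
    (hA : ∀ i, part A i = if i < r then k else if i < m then c else 0)
    (hrm : r ≤ m) (hck : c ≤ k) :
    IsLRTableau (List.replicate m k) A (List.replicate (m - r) (k - c))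
      (T0 m k r c) := by
  have hsk := inSkew_iff hA hrm
  constructor
  · intro i
    rw [hA, part_replicate]
    split <;> split <;> omega
  · intro i j
    rw [hsk]
    unfold T0
    split <;> simp_all
  · intro i j j' hj hj' hle
    rw [hsk] at hj hj'
    unfold T0
    rw [if_pos ⟨hj.1, hj.2.1, hj.2.2⟩, if_pos ⟨hj'.1, hj'.2.1, hj'.2.2⟩]
  · intro i i' j hj hj' hlt
    rw [hsk] at hj hj'
    unfold T0
    rw [if_pos ⟨hj.1, hj.2.1, hj.2.2⟩, if_pos ⟨hj'.1, hj'.2.1, hj'.2.2⟩]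
    omega
  · intro v
    rw [part_replicate]
    rcases lt_or_ge (r + v) m with h | h
    · have : {p : ℕ × ℕ | T0 m k r c p.1 p.2 = v + 1} =
          {p : ℕ × ℕ | p.1 = r + v ∧ c ≤ p.2 ∧ p.2 < k} := by
        ext p; simp only [Set.mem_setOf_eq, T0_eq_iff]; omega
      rw [this, rowSet_ncard, if_pos (by omega)]
    · have : {p : ℕ × ℕ | T0 m k r c p.1 p.2 = v + 1} = ∅ := by
        ext p; simp only [Set.mem_setOf_eq, T0_eq_iff, Set.mem_empty_iff_false, iff_false]; omega
      rw [this, Set.ncard_empty, if_neg (by omega)]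
  · intro r' c' v
    refine Set.ncard_le_ncard_of_injOn (fun p => (p.1 - 1, p.2)) ?_ ?_ ?_
    · rintro ⟨i, j⟩ ⟨hT, hR⟩
      rw [T0_eq_iff] at hT
      obtain ⟨rfl, h1, h2, h3⟩ := hT
      constructor
      · rw [T0_eq_iff]
        simp only
        omega
      · unfold ReadingLE at hR ⊢
        simp only at hR ⊢
        omega
    · rintro ⟨i, j⟩ ⟨hT, _⟩ ⟨i', j'⟩ ⟨hT', _⟩ heq
      rw [T0_eq_iff] at hT hT'
      simp only [Prod.mk.injEq] at heq ⊢
      omega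
    · apply Set.Finite.subset (T0_level_finite (m := m) (k := k) (r := r) (c := c) v)
      intro p hp
      exact hp.1

end Canon

section Unique

variable {m k r c : ℕ}

lemma LR_unique {A : List ℕ}
    (hA : ∀ i, part A i = if i < r then k else if i < m then c else 0)
    (hrm : r ≤ m) (hck : c ≤ k) {T : ℕ → ℕ → ℕ}
    (hT : IsLRTableau (List.replicate m k) A (List.replicate (m - r) (k - c)) T) :
    T = T0 m k r c := by
  have hsk := inSkew_iff hA hrm
  -- finiteness of level sets of T
  have hfin : ∀ v : ℕ, {p : ℕ × ℕ | T p.1 p.2 = v + 1}.Finite := by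
    intro v
    apply Set.Finite.subset ((Set.finite_Iio m).prod (Set.finite_Iio k))
    rintro ⟨i, j⟩ h
    simp only [Set.mem_setOf_eq] at h
    have hpos : 0 < T i j := by omega
    have := (hsk i j).mp ((hT.support i j).mp hpos)
    exact ⟨Set.mem_Iio.mpr this.2.1, Set.mem_Iio.mpr this.2.2.2⟩
  -- upper bound on entries
  have hub : ∀ i j, InSkew (List.replicate m k) A i j → T i j ≤ m - r := by
    intro i j hij
    by_contra hgt
    push_neg at hgt
    have hpos : 0 < T i j := (hT.support i j).mpr hij
    obtain ⟨v, hv⟩ : ∃ v, T i j = v + 1 := ⟨T i j - 1, by omega⟩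
    have hcont := hT.content v
    rw [part_replicate, if_neg (by omega)] at hcont
    have : (i, j) ∈ {p : ℕ × ℕ | T p.1 p.2 = v + 1} := hv
    have hne : {p : ℕ × ℕ | T p.1 p.2 = v + 1}.Nonempty := ⟨_, this⟩
    have := Set.ncard_pos (hfin v) |>.mpr hne
    omega
  -- lower bound: down a column entries grow
  have hlow : ∀ j, c ≤ j → j < k → ∀ d, r + d < m → d + 1 ≤ T (r + d) j := by
    intro j hcj hjk d
    induction d with
    | zero =>
      intro hd
      exact (hT.support _ _).mpr ((hsk _ _).mpr ⟨le_refl r, by omega, hcj, hjk⟩)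
    | succ d ih =>
      intro hd
      show d + 1 + 1 ≤ T (r + d + 1) j
      have h1 : T (r + d) j < T (r + d + 1) j := by
        apply hT.col_strict _ _ _ ((hsk _ _).mpr (by omega)) ((hsk _ _).mpr (by omega)) (by omega)
      have := ih (by omega)
      omega
  -- down from the bottom
  have hhigh : ∀ j, c ≤ j → j < k → ∀ d, d < m - r → T (m - 1 - d) j ≤ m - r - d := by
    intro j hcj hjk d
    induction d with
    | zero =>
      intro hd
      simpa using hub (m - 1) j ((hsk _ _).mpr (by omega))
    | succ d ih =>
      intro hd
      have h1 : T (m - 1 - (d + 1)) j < T (m - 1 - d) j := by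
        apply hT.col_strict _ _ _ ((hsk _ _).mpr (by omega)) ((hsk _ _).mpr (by omega)) (by omega)
      have := ih (by omega)
      omega
  funext i j
  rcases Classical.em (InSkew (List.replicate m k) A i j) with hij | hij
  · have h1 := (hsk i j).mp hij
    have h2 := hlow j h1.2.2.1 h1.2.2.2 (i - r) (by omega)
    have h3 := hhigh j h1.2.2.1 h1.2.2.2 (m - 1 - i) (by omega)
    rw [show r + (i - r) = i by omega] at h2
    rw [show m - 1 - (m - 1 - i) = i by omega] at h3
    unfold T0
    rw [if_pos ⟨h1.1, h1.2.1, h1.2.2⟩]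
    omega
  · have : T i j = 0 := by
      by_contra hne
      exact hij ((hT.support i j).mp (by omega))
    rw [this]
    unfold T0
    rw [if_neg]
    intro hc
    exact hij ((hsk i j).mpr hc)

lemma lrCoeff_canonical {A : List ℕ}
    (hA : ∀ i, part A i = if i < r then k else if i < m then c else 0)
    (hrm : r ≤ m) (hck : c ≤ k) :
    lrCoeff (List.replicate m k) A (List.replicate (m - r) (k - c)) = 1 := by
  unfold lrCoeff
  have : {T : ℕ → ℕ → ℕ |
      IsLRTableau (List.replicate m k) A (List.replicate (m - r) (k - c)) T} =
      {T0 m k r c} := by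
    ext T
    simp only [Set.mem_setOf_eq, Set.mem_singleton_iff]
    exact ⟨fun h => LR_unique hA hrm hck h, fun h => h ▸ isLR_T0 hA hrm hck⟩
  rw [this, Set.ncard_singleton]

end Unique

section Bounds

lemma grid_eq (m k : ℕ) :
    {p : ℕ × ℕ | p.1 < m ∧ p.2 < k} = ↑(Finset.range m ×ˢ Finset.range k) := by
  ext ⟨i, j⟩
  simp [Finset.mem_product]

lemma grid_ncard (m k : ℕ) : {p : ℕ × ℕ | p.1 < m ∧ p.2 < k}.ncard = m * k := by
  rw [grid_eq, Set.ncard_coe_finset, Finset.card_product, Finset.card_range,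
    Finset.card_range]

lemma grid_finite (m k : ℕ) : {p : ℕ × ℕ | p.1 < m ∧ p.2 < k}.Finite := by
  rw [grid_eq]; exact (Finset.range m ×ˢ Finset.range k).finite_toSet

lemma lrCoeff_bounds {m k : ℕ} (hm : 1 ≤ m) (hk : 1 ≤ k) {a b : List ℕ}
    (ha : IsPartition a) (hb : IsPartition b)
    (hne : lrCoeff (List.replicate m k) a b ≠ 0) :
    (a.length ≤ m * k ∧ ∀ x ∈ a, x ≤ m * k) ∧
      (b.length ≤ m * k ∧ ∀ x ∈ b, x ≤ m * k) := by
  obtain ⟨T, hT⟩ : ∃ T, IsLRTableau (List.replicate m k) a b T := by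
    by_contra hc
    push_neg at hc
    apply hne
    unfold lrCoeff
    have : {T : ℕ → ℕ → ℕ | IsLRTableau (List.replicate m k) a b T} = ∅ := by
      ext T; simpa using hc T
    rw [this, Set.ncard_empty]
  -- part of a bounded by parts of nu
  have hsub : ∀ i, part a i ≤ part (List.replicate m k) i := hT.subset
  have halen : a.length ≤ m := by
    by_contra hc
    push_neg at hc
    have h1 := part_lt_length ha (show m < a.length from hc)
    have := hsub m
    rw [part_replicate, if_neg (lt_irrefl m)] at this
    omega
  have haelem : ∀ x ∈ a, x ≤ k := by
    intro x hx
    obtain ⟨i, hi, rfl⟩ := List.getElem_of_mem hx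
    have h1 : part a i = a[i] := by
      unfold part
      rw [List.getD_eq_getElem?_getD, List.getElem?_eq_getElem hi]
      rfl
    have := hsub i
    rw [part_replicate] at this
    split at this <;> omega
  -- level sets of T
  have hlvl : ∀ v : ℕ, {p : ℕ × ℕ | T p.1 p.2 = v + 1} ⊆
      {p : ℕ × ℕ | p.1 < m ∧ p.2 < k} := by
    intro v ⟨i, j⟩ h
    simp only [Set.mem_setOf_eq] at h ⊢
    have hpos : 0 < T i j := by omega
    have h2 := (hT.support i j).mp hpos
    unfold InSkew at h2
    rw [part_replicate] at h2
    rcases h2 with ⟨_, h3⟩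
    split at h3 <;> omega
  have hfin : ∀ v : ℕ, {p : ℕ × ℕ | T p.1 p.2 = v + 1}.Finite :=
    fun v => (grid_finite m k).subset (hlvl v)
  -- elements of b
  have hbelem : ∀ x ∈ b, x ≤ m * k := by
    intro x hx
    obtain ⟨v, hv, rfl⟩ := List.getElem_of_mem hx
    have h1 : part b v = b[v] := by
      unfold part
      rw [List.getD_eq_getElem?_getD, List.getElem?_eq_getElem hv]
      rfl
    rw [← h1, ← hT.content v, ← grid_ncard m k]
    exact Set.ncard_le_ncard (hlvl v) (grid_finite m k)
  -- length of b: injection from Iio b.length into the grid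
  have hblen : b.length ≤ m * k := by
    classical
    have hchoice : ∀ v < b.length, {p : ℕ × ℕ | T p.1 p.2 = v + 1}.Nonempty := by
      intro v hv
      rw [← Set.ncard_pos (hfin v), hT.content v]
      exact part_lt_length hb hv
    set f : ℕ → ℕ × ℕ := fun v =>
      if h : v < b.length then (hchoice v h).choose else (0, 0) with hf
    have hfval : ∀ v (h : v < b.length), T (f v).1 (f v).2 = v + 1 := by
      intro v h
      have := (hchoice v h).choose_spec
      simp only [hf, dif_pos h]
      exact this
    calc b.length = (Set.Iio b.length).ncard := by
          rw [← Finset.coe_range, Set.ncard_coe_finset, Finset.card_range]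
      _ ≤ {p : ℕ × ℕ | p.1 < m ∧ p.2 < k}.ncard := by
          refine Set.ncard_le_ncard_of_injOn f ?_ ?_ ?_
          · intro v hv
            exact hlvl v (hfval v hv)
          · intro v hv w hw hvw
            have h1 := hfval v hv
            have h2 := hfval w hw
            rw [hvw] at h1
            omega
          · exact grid_finite m k
      _ = m * k := grid_ncard m k
  exact ⟨⟨le_trans halen (Nat.le_mul_of_pos_right m hk), fun x hx =>
      le_trans (haelem x hx) (Nat.le_mul_of_pos_left k hm)⟩, hblen, hbelem⟩

lemma bounded_lists_finite (N : ℕ) :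
    {l : List ℕ | l.length ≤ N ∧ ∀ x ∈ l, x ≤ N}.Finite := by
  have h1 : {l : List (Fin (N + 1)) | l.length ≤ N}.Finite :=
    List.finite_length_le (Fin (N + 1)) N
  apply Set.Finite.subset (h1.image (List.map (Fin.val)))
  intro l ⟨hlen, helem⟩
  refine ⟨l.attach.map (fun x => (⟨x.1, Nat.lt_succ_of_le (helem x.1 x.2)⟩ : Fin (N + 1))), ?_, ?_⟩
  · simpa using hlen
  · simp [List.map_map, Function.comp]

end Bounds

section Main

lemma isPartition_replicate (n v : ℕ) (hv : 0 < v) : IsPartition (List.replicate n v) := by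
  constructor
  · apply List.pairwise_replicate.mpr
    simp
  · intro x hx
    rw [List.eq_of_mem_replicate hx]; exact hv

lemma main_aux (m k r c : ℕ) (hm : 1 ≤ m) (hk : 1 ≤ k) (hrm : r ≤ m) (hck : c ≤ k)
    (A : List ℕ) (hPA : IsPartition A)
    (hA : ∀ i, part A i = if i < r then k else if i < m then c else 0)
    (hrep : List.replicate (m - r) (k - c) = A) :
    1 ≤ nlCoeff (List.replicate m k) (List.replicate m k) (List.replicate m k) := by
  classical
  have hone : lrCoeff (List.replicate m k) A A = 1 := by
    have := lrCoeff_canonical hA hrm hck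
    rwa [hrep] at this
  set P := {l : List ℕ | l.length ≤ m * k ∧ ∀ x ∈ l, x ≤ m * k} with hP
  set F : {l : List ℕ // IsPartition l} × {l : List ℕ // IsPartition l} ×
      {l : List ℕ // IsPartition l} → ℕ := fun x =>
    lrCoeff (List.replicate m k) x.1.val x.2.1.val *
      lrCoeff (List.replicate m k) x.1.val x.2.2.val *
      lrCoeff (List.replicate m k) x.2.1.val x.2.2.val with hF
  have hsupfin : (Function.support F).Finite := by
    have hPfin : P.Finite := bounded_lists_finite (m * k)
    have hpre : ((fun x : {l : List ℕ // IsPartition l} × {l : List ℕ // IsPartition l} ×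
        {l : List ℕ // IsPartition l} => (x.1.val, x.2.1.val, x.2.2.val)) ⁻¹'
        (P ×ˢ P ×ˢ P)).Finite := by
      apply Set.Finite.preimage _ (hPfin.prod (hPfin.prod hPfin))
      intro x _ y _ hxy
      simp only [Prod.mk.injEq] at hxy
      exact Prod.ext (Subtype.ext hxy.1) (Prod.ext (Subtype.ext hxy.2.1) (Subtype.ext hxy.2.2))
    apply hpre.subset
    intro x hx
    rw [Function.mem_support, hF] at hx
    have h1 : lrCoeff (List.replicate m k) x.1.val x.2.1.val ≠ 0 := by
      intro h; apply hx; simp [h]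
    have h2 : lrCoeff (List.replicate m k) x.1.val x.2.2.val ≠ 0 := by
      intro h; apply hx; simp [h]
    have hb1 := lrCoeff_bounds hm hk x.1.prop x.2.1.prop h1
    have hb2 := lrCoeff_bounds hm hk x.1.prop x.2.2.prop h2
    exact ⟨hb1.1, hb1.2, hb2.2⟩
  set x₀ : {l : List ℕ // IsPartition l} × {l : List ℕ // IsPartition l} ×
      {l : List ℕ // IsPartition l} := (⟨A, hPA⟩, ⟨A, hPA⟩, ⟨A, hPA⟩) with hx₀
  have hFx₀ : F x₀ = 1 := by
    rw [hF]
    simp only [hx₀, hone]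
  calc (1 : ℕ) = F x₀ := hFx₀.symm
    _ ≤ ∑ᶠ x, F x := single_le_finsum x₀ hsupfin (fun _ => Nat.zero_le _)
    _ = nlCoeff (List.replicate m k) (List.replicate m k) (List.replicate m k) := rfl

end Main

/-- For a rectangular partition `λ = (k^m)` with `mk` even,
`N^λ_{λλ} ≥ 1`; equivalently, `⊗³` detects `𝕊_{∥λ∥}(G)` in this case. -/
theorem one_le_nlCoeff_rectangular (m k : ℕ) (hm : 1 ≤ m) (hk : 1 ≤ k)
    (h : Even (m * k)) :
    1 ≤ nlCoeff (List.replicate m k) (List.replicate m k)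
        (List.replicate m k) := by
  rcases Nat.even_mul.mp h with he | he
  · -- m even : r = m / 2, c = 0, A = replicate (m/2) k
    obtain ⟨t, ht⟩ := he
    refine main_aux m k (m / 2) 0 hm hk (by omega) (by omega)
      (List.replicate (m / 2) k) (isPartition_replicate _ _ hk) ?_ ?_
    · intro i
      rw [part_replicate]
      split_ifs <;> omega
    · have : m - m / 2 = m / 2 := by omega
      rw [this, Nat.sub_zero]
  · -- k even : r = 0, c = k / 2, A = replicate m (k/2)
    obtain ⟨t, ht⟩ := he
    refine main_aux m k 0 (k / 2) hm hk (by omega) (by omega)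
      (List.replicate m (k / 2)) (isPartition_replicate _ _ (by omega)) ?_ ?_
    · intro i
      rw [part_replicate]
      split_ifs <;> omega
    · have : k - k / 2 = k / 2 := by omega
      rw [this, Nat.sub_zero]
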